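/- (First Fredholm minor for a finite-rank kernel.) Let x < y be real numbers, M a positive integer, γ ∈ ℂ, and let φ₁,…,φ_M, ψ₁,…,ψ_M : [x,y] → ℂ be measurable bounded functions. Define K(λ,μ) = Σ_{i=1}^{M} φᵢ(λ)·ψᵢ(μ), the matrix S with S_{ij} = ∫_x^y φᵢψⱼ, and assume I_M − γSᵀ is invertible; set R(λ,μ) = Σ_{i,j=1}^{M} φᵢ(λ) ((I_M − γSᵀ)^{−1})_{ij} ψⱼ(μ). Then for all λ, μ ∈ [x,y]: K(λ,μ) + Σ_{p=1}^{M−1} ((−γ)^p / p!) ∫_x^y dν₁ ⋯ ∫_x^y dν_p det( K(u_r, v_s) )_{r,s=0}^{p} = R(λ,μ) · det(I_M − γS), where in the (p+1)×(p+1) determinant the arguments are u₀ = λ, v₀ = μ and u_r = v_r = ν_r for r = 1,…,p. -/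

import Mathlib

open MeasureTheory

section Aux

lemma restrict_pi_icc {n : ℕ} (x y : ℝ) :
    (volume : Measure (Fin n → ℝ)).restrict (Set.univ.pi fun _ => Set.Icc x y)
      = Measure.pi fun _ => (volume : Measure ℝ).restrict (Set.Icc x y) := by
  refine (Measure.pi_eq (μ := fun _ : Fin n => (volume : Measure ℝ).restrict (Set.Icc x y))
    fun s hs => ?_).symm
  rw [Measure.restrict_apply (MeasurableSet.univ_pi hs)]
  have h2 : (Set.univ.pi s) ∩ (Set.univ.pi fun _ => Set.Icc x y)
      = Set.univ.pi fun i => s i ∩ Set.Icc x y := by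
    rw [← Set.pi_inter_distrib]
  rw [h2, volume_pi, Measure.pi_pi]
  exact Finset.prod_congr rfl fun i _ => (Measure.restrict_apply (hs i)).symm

lemma integral_pi_prod {n : ℕ} (μ : Measure ℝ) [SigmaFinite μ]
    (f : Fin n → ℝ → ℂ) :
    ∫ x : Fin n → ℝ, ∏ i, f i (x i) ∂(Measure.pi fun _ => μ) = ∏ i, ∫ t, f i t ∂μ := by
  letI : MeasureSpace ℝ := ⟨μ⟩
  letI : SigmaFinite (volume : Measure ℝ) := ‹SigmaFinite μ›
  exact integral_fintype_prod_eq_prod f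

lemma integrable_pi_prod {n : ℕ} (μ : Measure ℝ) [SigmaFinite μ]
    (f : Fin n → ℝ → ℂ) (hf : ∀ i, Integrable (f i) μ) :
    Integrable (fun x : Fin n → ℝ => ∏ i, f i (x i)) (Measure.pi fun _ => μ) := by
  letI : MeasureSpace ℝ := ⟨μ⟩
  letI : SigmaFinite (volume : Measure ℝ) := ‹SigmaFinite μ›
  exact Integrable.fintype_prod hf

/-- Expansion of a determinant whose rows are sums of scaled vectors. -/
lemma det_expand_rows {q N : ℕ} (c : Fin q → Fin N → ℂ) (w : Fin N → Fin q → ℂ) :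
    (Matrix.of fun r t => ∑ i, c r i * w i t).det
      = ∑ g : Fin q → Fin N, (∏ r, c r (g r)) * (Matrix.of fun r t => w (g r) t).det := by
  classical
  have h1 : (Matrix.of fun r t => ∑ i, c r i * w i t)
      = fun r => ∑ i, c r i • w i := by
    funext r t
    simp [Finset.sum_apply]
  calc (Matrix.of fun r t => ∑ i, c r i * w i t).det
      = (Matrix.detRowAlternating (R := ℂ) (n := Fin q)).toMultilinearMap
          (fun r => ∑ i, c r i • w i) := by rw [← h1]; rfl
    _ = ∑ g : Fin q → Fin N, (Matrix.detRowAlternating (R := ℂ) (n := Fin q)).toMultilinearMap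
          (fun r => c r (g r) • w (g r)) :=
        (Matrix.detRowAlternating (R := ℂ) (n := Fin q)).toMultilinearMap.map_sum
          (g := fun r i => c r i • w i)
    _ = ∑ g : Fin q → Fin N, (∏ r, c r (g r)) * (Matrix.of fun r t => w (g r) t).det := by
        refine Finset.sum_congr rfl fun g _ => ?_
        rw [MultilinearMap.map_smul_univ, smul_eq_mul]
        rfl

/-- `det(X + Y)` as a sum over subsets of rows. -/
lemma det_add_univ {n : Type*} [DecidableEq n] [Fintype n] (X Y : Matrix n n ℂ) :
    (X + Y).det = ∑ s : Finset n, Matrix.det (Matrix.of fun i j => s.piecewise X Y i j) :=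
  (Matrix.detRowAlternating (R := ℂ) (n := n)).toMultilinearMap.map_add_univ X Y

/-- A determinant with two proportional rows vanishes. -/
lemma det_zero_of_smul_rows {n : Type*} [DecidableEq n] [Fintype n] (A : Matrix n n ℂ)
    {i j : n} (hij : i ≠ j) (w : n → ℂ) (ci cj : ℂ)
    (hi : A i = ci • w) (hj : A j = cj • w) : A.det = 0 := by
  have h1 : A = A.updateRow i (ci • w) := by rw [← hi, Matrix.updateRow_eq_self]
  rw [h1, Matrix.det_updateRow_smul]
  have hrow : (A.updateRow i w) j = cj • w := by
    rw [Matrix.updateRow_ne hij.symm, hj]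
  have h2 : (A.updateRow i w) = (A.updateRow i w).updateRow j ((A.updateRow i w) j) := by
    rw [Matrix.updateRow_eq_self]
  rw [h2, hrow, Matrix.det_updateRow_smul]
  have h3 : ((A.updateRow i w).updateRow j w).det = 0 := by
    refine Matrix.det_zero_of_row_eq hij ?_
    rw [Matrix.updateRow_ne hij, Matrix.updateRow_self, Matrix.updateRow_self]
  rw [h3, mul_zero, mul_zero]

/-- Sum over all subsets of a function vanishing on subsets of size ≥ 2. -/
lemma sum_split_card {ι : Type*} [Fintype ι] [DecidableEq ι] (f : Finset ι → ℂ)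
    (hf : ∀ u : Finset ι, 2 ≤ u.card → f u = 0) :
    ∑ u : Finset ι, f u = f ∅ + ∑ i : ι, f {i} := by
  classical
  rw [← Finset.sum_filter_add_sum_filter_not Finset.univ (fun u : Finset ι => u.card ≤ 1) f]
  have h0 : ∑ u ∈ Finset.univ.filter (fun u : Finset ι => ¬ u.card ≤ 1), f u = 0 :=
    Finset.sum_eq_zero fun u hu => hf u (by
      have := (Finset.mem_filter.mp hu).2; omega)
  rw [h0, add_zero]
  have hset : Finset.univ.filter (fun u : Finset ι => u.card ≤ 1)
      = insert (∅ : Finset ι) (Finset.univ.image fun i : ι => ({i} : Finset ι)) := by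
    ext u
    simp only [Finset.mem_filter, Finset.mem_univ, true_and, Finset.mem_insert, Finset.mem_image]
    constructor
    · intro h
      rcases Nat.le_one_iff_eq_zero_or_eq_one.mp h with h | h
      · exact Or.inl (Finset.card_eq_zero.mp h)
      · rcases Finset.card_eq_one.mp h with ⟨a, rfl⟩
        exact Or.inr ⟨a, rfl⟩
    · rintro (rfl | ⟨a, -, rfl⟩) <;> simp
  rw [hset, Finset.sum_insert (by simp), Finset.sum_image
    (fun i _ j _ h => Finset.singleton_injective h)]

/-- Determinant of a matrix that is the identity outside of rows in `s`. -/
lemma det_piecewise_one {n : Type*} [DecidableEq n] [Fintype n]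
    (T : Matrix n n ℂ) (s : Finset n) :
    Matrix.det (Matrix.of fun i j => s.piecewise T (1 : Matrix n n ℂ) i j)
      = (T.submatrix (fun i : {a // a ∈ s} => (i : n)) (fun i : {a // a ∈ s} => (i : n))).det := by
  classical
  let e : {a // a ∈ s} ⊕ {a // a ∉ s} ≃ n := Equiv.sumCompl (· ∈ s)
  rw [← Matrix.det_submatrix_equiv_self e
    (Matrix.of fun i j => s.piecewise T (1 : Matrix n n ℂ) i j)]
  have hmat : (Matrix.of fun i j => s.piecewise T (1 : Matrix n n ℂ) i j).submatrix e e
      = Matrix.fromBlocks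
          (T.submatrix (fun i : {a // a ∈ s} => (i : n)) (fun i : {a // a ∈ s} => (i : n)))
          (T.submatrix (fun i : {a // a ∈ s} => (i : n)) (fun i : {a // a ∉ s} => (i : n)))
          0 1 := by
    ext i j
    cases i with
    | inl i =>
      cases j with
      | inl j =>
        simp [e, Matrix.submatrix_apply, Finset.piecewise, i.2]
      | inr j =>
        simp [e, Matrix.submatrix_apply, Finset.piecewise, i.2]
    | inr i =>
      cases j with
      | inl j =>
        have hne : (i : n) ≠ (j : n) := fun h => i.2 (h ▸ j.2)
        simp [e, Matrix.submatrix_apply, Finset.piecewise, i.2,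
          Matrix.one_apply_ne hne]
      | inr j =>
        by_cases h : (i : n) = (j : n)
        · have hij : i = j := Subtype.ext h
          subst hij
          simp [e, Matrix.submatrix_apply, Finset.piecewise, i.2,
            Matrix.one_apply_eq]
        · have hij : i ≠ j := fun hh => h (congrArg _ hh)
          simp [e, Matrix.submatrix_apply, Finset.piecewise, i.2,
            Matrix.one_apply_ne h, Matrix.one_apply_ne hij]
  rw [hmat, Matrix.det_fromBlocks_zero₂₁, Matrix.det_one, mul_one]

lemma sum_perm_zero {q : ℕ} (F : Fin (q+1) → ℂ) :
    ∑ π : Equiv.Perm (Fin (q+1)), F (π 0) = (q.factorial : ℂ) * ∑ k, F k := by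
  rw [← Equiv.sum_comp (Equiv.Perm.decomposeFin.symm) (fun π : Equiv.Perm (Fin (q+1)) => F (π 0))]
  have h1 : ∀ z : Fin (q+1) × Equiv.Perm (Fin q),
      F (Equiv.Perm.decomposeFin.symm z 0) = F z.1 := by
    rintro ⟨k, τ⟩
    rw [Equiv.Perm.decomposeFin_symm_apply_zero]
  rw [Finset.sum_congr rfl fun z _ => h1 z, Fintype.sum_prod_type]
  have h2 : ∀ k : Fin (q+1), ∑ _τ : Equiv.Perm (Fin q), F k = (q.factorial : ℂ) * F k := by
    intro k
    rw [Finset.sum_const, Finset.card_univ, Fintype.card_perm, Fintype.card_fin, nsmul_eq_mul]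
  rw [Finset.sum_congr rfl fun k _ => h2 k, ← Finset.mul_sum]

lemma fin_one_eq (a b : Fin (0+1)) : a = b :=
  Fin.ext ((Nat.lt_one_iff.mp a.isLt).trans (Nat.lt_one_iff.mp b.isLt).symm)

lemma det_fin_zero_add_one (A : Matrix (Fin (0+1)) (Fin (0+1)) ℂ) : A.det = A 0 0 :=
  Matrix.det_fin_one A

variable {M : ℕ}

/-- The sum of determinants of `s`-indexed matrices with one distinguished `P`-row. -/
noncomputable def Esum (P Q : Matrix (Fin M) (Fin M) ℂ) (s : Finset (Fin M)) : ℂ :=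
  ∑ i : {a // a ∈ s}, (Matrix.of fun r t : {a // a ∈ s} =>
      (if r = i then P else Q) (r : Fin M) (t : Fin M)).det

lemma Esum_empty (P Q : Matrix (Fin M) (Fin M) ℂ) : Esum P Q ∅ = 0 := by
  have : IsEmpty {a : Fin M // a ∈ (∅ : Finset (Fin M))} :=
    ⟨fun i => (Finset.notMem_empty _ i.2)⟩
  rw [Esum, Finset.univ_eq_empty, Finset.sum_empty]

/-- Rank-one expansion of a principal minor of `Q + P`. -/
lemma rank1_split (a b : Fin M → ℂ) (P Q : Matrix (Fin M) (Fin M) ℂ)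
    (hP : ∀ i j, P i j = a i * b j) (s : Finset (Fin M)) :
    ((Q + P).submatrix (fun i : {a // a ∈ s} => (i : Fin M))
        (fun i : {a // a ∈ s} => (i : Fin M))).det
      = (Q.submatrix (fun i : {a // a ∈ s} => (i : Fin M))
          (fun i : {a // a ∈ s} => (i : Fin M))).det + Esum P Q s := by
  classical
  have hQP : (Q + P).submatrix (fun i : {a // a ∈ s} => (i : Fin M))
        (fun i : {a // a ∈ s} => (i : Fin M))
      = P.submatrix (fun i : {a // a ∈ s} => (i : Fin M)) (fun i : {a // a ∈ s} => (i : Fin M))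
        + Q.submatrix (fun i : {a // a ∈ s} => (i : Fin M))
            (fun i : {a // a ∈ s} => (i : Fin M)) := by
    ext i j
    simp [Matrix.submatrix_apply, add_comm]
  rw [hQP, det_add_univ]
  have hvanish : ∀ u : Finset {a // a ∈ s}, 2 ≤ u.card →
      Matrix.det (Matrix.of fun i j => u.piecewise
          (P.submatrix (fun i : {a // a ∈ s} => (i : Fin M))
            (fun i : {a // a ∈ s} => (i : Fin M)))
          (Q.submatrix (fun i : {a // a ∈ s} => (i : Fin M))
            (fun i : {a // a ∈ s} => (i : Fin M))) i j) = 0 := by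
    intro u hu
    obtain ⟨i, hi, j, hj, hij⟩ := Finset.one_lt_card.mp hu
    refine det_zero_of_smul_rows _ hij (fun t => b (t : Fin M)) (a (i : Fin M)) (a (j : Fin M))
      ?_ ?_
    · funext t
      simp [Finset.piecewise, hi, Matrix.submatrix_apply, hP]
    · funext t
      simp [Finset.piecewise, hj, Matrix.submatrix_apply, hP]
  have h0 : (Matrix.of fun i j => (∅ : Finset {a // a ∈ s}).piecewise
        (P.submatrix (fun i : {a // a ∈ s} => (i : Fin M))
          (fun i : {a // a ∈ s} => (i : Fin M)))
        (Q.submatrix (fun i : {a // a ∈ s} => (i : Fin M))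
          (fun i : {a // a ∈ s} => (i : Fin M))) i j)
        = Q.submatrix (fun i : {a // a ∈ s} => (i : Fin M))
            (fun i : {a // a ∈ s} => (i : Fin M)) := by
      ext i j
      simp [Finset.piecewise]
  have hm : ∀ i : {a // a ∈ s}, (Matrix.of fun r t => ({i} : Finset {a // a ∈ s}).piecewise
        (P.submatrix (fun i : {a // a ∈ s} => (i : Fin M))
          (fun i : {a // a ∈ s} => (i : Fin M)))
        (Q.submatrix (fun i : {a // a ∈ s} => (i : Fin M))
          (fun i : {a // a ∈ s} => (i : Fin M))) r t)
        = Matrix.of fun r t : {a // a ∈ s} =>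
            (if r = i then P else Q) (r : Fin M) (t : Fin M) := by
    intro i
    ext r t
    by_cases h : r = i
    · subst h
      simp [Finset.piecewise]
    · simp [Finset.piecewise, h]
  rw [sum_split_card _ hvanish, h0, Esum]
  exact congrArg₂ (· + ·) rfl
    (Finset.sum_congr rfl fun i _ => congrArg Matrix.det (hm i))

/-- Counting lemma: the sum of `det C_g` over injective `g` with image `s`. -/
lemma count_fiber (P Q : Matrix (Fin M) (Fin M) ℂ) (p : ℕ) (s : Finset (Fin M))
    (hs : s.card = p + 1) :
    ∑ g ∈ Finset.univ.filter (fun g : Fin (p+1) → Fin M =>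
        Function.Injective g ∧ Finset.image g Finset.univ = s),
      (Matrix.of fun r t => (if r = 0 then P else Q) (g r) (g t)).det
    = (p.factorial : ℂ) * Esum P Q s := by
  classical
  let e : Fin (p+1) ≃ {a // a ∈ s} := (s.orderIsoOfFin hs).toEquiv
  have himg : Finset.univ.filter (fun g : Fin (p+1) → Fin M =>
      Function.Injective g ∧ Finset.image g Finset.univ = s)
      = Finset.image (fun π : Equiv.Perm (Fin (p+1)) => fun r => ((e (π r)) : Fin M))
          Finset.univ := by
    ext g
    simp only [Finset.mem_filter, Finset.mem_univ, true_and, Finset.mem_image]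
    constructor
    · rintro ⟨hinj, himage⟩
      have hmem : ∀ r, g r ∈ s := fun r => by
        rw [← himage]; exact Finset.mem_image_of_mem _ (Finset.mem_univ r)
      have hfbij : Function.Bijective (fun r => (⟨g r, hmem r⟩ : {a // a ∈ s})) := by
        rw [Fintype.bijective_iff_injective_and_card]
        refine ⟨fun r t h => hinj (congrArg Subtype.val h), ?_⟩
        rw [Fintype.card_coe, hs, Fintype.card_fin]
      refine ⟨(Equiv.ofBijective _ hfbij).trans e.symm, ?_⟩
      funext r
      simp [Equiv.ofBijective]
    · rintro ⟨π, rfl⟩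
      constructor
      · intro r t h
        exact π.injective (e.injective (Subtype.val_injective h))
      · ext i
        simp only [Finset.mem_image, Finset.mem_univ, true_and]
        constructor
        · rintro ⟨r, rfl⟩
          exact (e (π r)).2
        · intro hi
          exact ⟨π.symm (e.symm ⟨i, hi⟩), by simp⟩
  rw [himg, Finset.sum_image (fun π _ τ _ h => Equiv.ext fun r =>
      e.injective (Subtype.val_injective (congrFun h r)))]
  have hdet : ∀ π : Equiv.Perm (Fin (p+1)),
      (Matrix.of fun r t =>
          (if r = 0 then P else Q) ((e (π r)) : Fin M) ((e (π t)) : Fin M)).det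
      = (Matrix.of fun r t : {a // a ∈ s} =>
          (if r = e (π 0) then P else Q) (r : Fin M) (t : Fin M)).det := by
    intro π
    have h2 : (Matrix.of fun r t =>
          (if r = 0 then P else Q) ((e (π r)) : Fin M) ((e (π t)) : Fin M))
        = (Matrix.of fun r t : {a // a ∈ s} =>
            (if r = e (π 0) then P else Q) (r : Fin M) (t : Fin M)).submatrix
            (fun r => e (π r)) (fun t => e (π t)) := by
      ext r t
      simp only [Matrix.submatrix_apply, Matrix.of_apply]
      by_cases h : r = 0
      · rw [if_pos h, if_pos (by rw [h])]
      · rw [if_neg h, if_neg (fun hh => h (π.injective (e.injective hh)))]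
    rw [h2]
    exact Matrix.det_submatrix_equiv_self (π.trans e) _
  rw [Finset.sum_congr rfl fun π _ => hdet π]
  rw [sum_perm_zero (fun k => (Matrix.of fun r t : {a // a ∈ s} =>
      (if r = e k then P else Q) (r : Fin M) (t : Fin M)).det)]
  congr 1
  exact Equiv.sum_comp e (fun i => (Matrix.of fun r t : {a // a ∈ s} =>
      (if r = i then P else Q) (r : Fin M) (t : Fin M)).det)

/-- Master algebraic identity. -/
lemma alg_master (hM : 0 < M) (a b : Fin M → ℂ) (P Q : Matrix (Fin M) (Fin M) ℂ)
    (hP : ∀ i j, P i j = a i * b j) :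
    ∑ p ∈ Finset.range M, ((p.factorial : ℂ))⁻¹ *
        ∑ g : Fin (p+1) → Fin M, (Matrix.of fun r t =>
          (if r = 0 then P else Q) (g r) (g t)).det
      = (1 + Q + P).det - (1 + Q).det := by
  classical
  -- step 1: per p, restrict to injective g and group by image
  have hstep : ∀ p : ℕ, ∑ g : Fin (p+1) → Fin M, (Matrix.of fun r t =>
          (if r = 0 then P else Q) (g r) (g t)).det
      = ∑ s ∈ Finset.univ.filter (fun s : Finset (Fin M) => s.card = p + 1),
          (p.factorial : ℂ) * Esum P Q s := by
    intro p
    have hzero : ∀ g : Fin (p+1) → Fin M, ¬ Function.Injective g →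
        (Matrix.of fun r t => (if r = 0 then P else Q) (g r) (g t)).det = 0 := by
      intro g hg
      obtain ⟨t1, t2, hgt, hne⟩ := Function.not_injective_iff.mp hg
      refine Matrix.det_zero_of_column_eq hne fun k => ?_
      simp only [Matrix.of_apply, hgt]
    have h1 : ∑ g : Fin (p+1) → Fin M, (Matrix.of fun r t =>
          (if r = 0 then P else Q) (g r) (g t)).det
        = ∑ g ∈ Finset.univ.filter (fun g : Fin (p+1) → Fin M => Function.Injective g),
          (Matrix.of fun r t => (if r = 0 then P else Q) (g r) (g t)).det := by
      rw [Finset.sum_filter_of_ne]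
      intro g _ hne
      by_contra hg
      exact hne (hzero g hg)
    rw [h1]
    have hmaps : ∀ g ∈ Finset.univ.filter (fun g : Fin (p+1) → Fin M => Function.Injective g),
        Finset.image g Finset.univ
          ∈ Finset.univ.filter (fun s : Finset (Fin M) => s.card = p + 1) := by
      intro g hg
      simp only [Finset.mem_filter, Finset.mem_univ, true_and] at hg ⊢
      rw [Finset.card_image_of_injective _ hg, Finset.card_univ, Fintype.card_fin]
    rw [← Finset.sum_fiberwise_of_maps_to hmaps]
    refine Finset.sum_congr rfl fun s hsmem => ?_
    simp only [Finset.mem_filter, Finset.mem_univ, true_and] at hsmem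
    rw [Finset.filter_filter]
    exact count_fiber P Q p s hsmem
  -- step 2: simplify with factorial inverses
  have hfac : ∀ p : ℕ, ((p.factorial : ℂ))⁻¹ * ∑ s ∈ Finset.univ.filter
        (fun s : Finset (Fin M) => s.card = p + 1), (p.factorial : ℂ) * Esum P Q s
      = ∑ s ∈ Finset.univ.filter (fun s : Finset (Fin M) => s.card = p + 1), Esum P Q s := by
    intro p
    rw [Finset.mul_sum]
    refine Finset.sum_congr rfl fun s _ => ?_
    rw [← mul_assoc, inv_mul_cancel₀ (by exact_mod_cast p.factorial_ne_zero), one_mul]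
  have hL : ∑ p ∈ Finset.range M, ((p.factorial : ℂ))⁻¹ *
        ∑ g : Fin (p+1) → Fin M, (Matrix.of fun r t =>
          (if r = 0 then P else Q) (g r) (g t)).det
      = ∑ s : Finset (Fin M), Esum P Q s := by
    calc ∑ p ∈ Finset.range M, ((p.factorial : ℂ))⁻¹ *
          ∑ g : Fin (p+1) → Fin M, (Matrix.of fun r t =>
            (if r = 0 then P else Q) (g r) (g t)).det
        = ∑ p ∈ Finset.range M,
            ∑ s ∈ Finset.univ.filter (fun s : Finset (Fin M) => s.card = p + 1),
              Esum P Q s := by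
          refine Finset.sum_congr rfl fun p _ => ?_
          rw [hstep p, hfac p]
      _ = ∑ s : Finset (Fin M), Esum P Q s := by
          have hmaps2 : ∀ s : Finset (Fin M), s ∈ Finset.univ →
              s.card ∈ Finset.range (M + 1) := by
            intro s _
            rw [Finset.mem_range]
            have h : s.card ≤ M := by simpa using Finset.card_le_univ s
            omega
          rw [← Finset.sum_fiberwise_of_maps_to hmaps2 (Esum P Q)]
          rw [Finset.sum_range_succ']
          have hzero : ∑ s ∈ Finset.univ.filter (fun s : Finset (Fin M) => s.card = 0),
              Esum P Q s = 0 := by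
            refine Finset.sum_eq_zero fun s hsmem => ?_
            simp only [Finset.mem_filter, Finset.mem_univ, true_and, Finset.card_eq_zero] at hsmem
            rw [hsmem, Esum_empty]
          rw [hzero, add_zero]
  rw [hL]
  -- step 3: expand the two determinants
  have hR1 : (1 + Q + P).det = ∑ s : Finset (Fin M),
      (((Q + P)).submatrix (fun i : {a // a ∈ s} => (i : Fin M))
        (fun i : {a // a ∈ s} => (i : Fin M))).det := by
    have : (1 : Matrix (Fin M) (Fin M) ℂ) + Q + P = (Q + P) + 1 := by abel
    rw [this, det_add_univ]
    exact Finset.sum_congr rfl fun s _ => det_piecewise_one (Q + P) s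
  have hR2 : (1 + Q).det = ∑ s : Finset (Fin M),
      (Q.submatrix (fun i : {a // a ∈ s} => (i : Fin M))
        (fun i : {a // a ∈ s} => (i : Fin M))).det := by
    have : (1 : Matrix (Fin M) (Fin M) ℂ) + Q = Q + 1 := by abel
    rw [this, det_add_univ]
    exact Finset.sum_congr rfl fun s _ => det_piecewise_one Q s
  rw [hR1, hR2, ← Finset.sum_sub_distrib]
  refine Finset.sum_congr rfl fun s _ => ?_
  rw [rank1_split a b P Q hP s]
  ring

end Aux

/-- First Fredholm minor for a finite-rank kernel: with `K(λ,μ) = Σᵢ φᵢ(λ)ψᵢ(μ)`,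
`S_{ij} = ∫_x^y φᵢ ψⱼ`, `I_M − γSᵀ` invertible and
`R(λ,μ) = Σ_{i,j} φᵢ(λ) ((I_M − γSᵀ)⁻¹)_{ij} ψⱼ(μ)`, one has for `λ, μ ∈ [x,y]`:
`K(λ,μ) + Σ_{p=1}^{M−1} ((−γ)ᵖ/p!) ∫_{[x,y]ᵖ} det(K(u_r,v_s))_{r,s=0}^{p} dν
  = R(λ,μ) det(I_M − γS)`, where `u₀ = λ, v₀ = μ` and `u_r = v_r = ν_r` for `r ≥ 1`. -/
theorem first_fredholm_minor_finite_rank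
    (x y : ℝ) (hxy : x < y) (M : ℕ) (hM : 0 < M) (γ : ℂ)
    (φ ψ : Fin M → ℝ → ℂ)
    (hφm : ∀ i, Measurable (φ i)) (hψm : ∀ i, Measurable (ψ i))
    (hφb : ∀ i, ∃ C : ℝ, ∀ t ∈ Set.Icc x y, ‖φ i t‖ ≤ C)
    (hψb : ∀ i, ∃ C : ℝ, ∀ t ∈ Set.Icc x y, ‖ψ i t‖ ≤ C)
    (K : ℝ → ℝ → ℂ) (hK : K = fun l m => ∑ i : Fin M, φ i l * ψ i m)
    (S : Matrix (Fin M) (Fin M) ℂ)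
    (hS : S = Matrix.of fun i j : Fin M => ∫ t in Set.Icc x y, φ i t * ψ j t)
    (hinv : IsUnit (1 - γ • S.transpose).det)
    (R : ℝ → ℝ → ℂ)
    (hR : R = fun l m => ∑ i : Fin M, ∑ j : Fin M,
        φ i l * (1 - γ • S.transpose)⁻¹ i j * ψ j m) :
    ∀ l ∈ Set.Icc x y, ∀ m ∈ Set.Icc x y,
      K l m + ∑ p ∈ Finset.Icc 1 (M - 1), ((-γ) ^ p / (p.factorial : ℂ)) *
          ∫ ν in Set.univ.pi (fun _ : Fin p => Set.Icc x y),
            Matrix.det (Matrix.of fun r s : Fin (p + 1) =>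
              K ((Fin.cons l ν : Fin (p + 1) → ℝ) r) ((Fin.cons m ν : Fin (p + 1) → ℝ) s))
        = R l m * Matrix.det (1 - γ • S) := by
  intro l hl m hm
  classical
  set μ0 : Measure ℝ := volume.restrict (Set.Icc x y) with hμ0
  haveI : IsFiniteMeasure μ0 := ⟨by rw [hμ0, Measure.restrict_apply_univ]; exact measure_Icc_lt_top⟩
  set P : Matrix (Fin M) (Fin M) ℂ := Matrix.of fun i j => φ i l * ψ j m with hPdef
  set Q : Matrix (Fin M) (Fin M) ℂ := (-γ) • S with hQdef
  set B : Matrix (Fin M) (Fin M) ℂ := 1 - γ • S with hBdef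
  have hBQ : B = 1 + Q := by rw [hBdef, hQdef, sub_eq_add_neg, neg_smul]
  have hBdet : IsUnit B.det := by
    have h1 : (1 - γ • S.transpose) = B.transpose := by
      rw [hBdef, Matrix.transpose_sub, Matrix.transpose_smul, Matrix.transpose_one]
    rw [h1, Matrix.det_transpose] at hinv
    exact hinv
  -- integrability of coordinate products
  have hmul : ∀ i j : Fin M, Integrable (fun t => φ i t * ψ j t) μ0 := by
    intro i j
    obtain ⟨Cφ, hCφ⟩ := hφb i
    obtain ⟨Cψ, hCψ⟩ := hψb j
    refine Integrable.mono' (integrable_const (Cφ * Cψ))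
      ((hφm i).mul (hψm j)).aestronglyMeasurable ?_
    rw [hμ0]
    filter_upwards [ae_restrict_mem measurableSet_Icc] with t ht
    rw [norm_mul]
    exact mul_le_mul (hCφ t ht) (hCψ t ht) (norm_nonneg _) ((norm_nonneg _).trans (hCφ t ht))
  have hSint : ∀ i j : Fin M, ∫ t, φ i t * ψ j t ∂μ0 = S i j := by
    intro i j
    rw [hS]
    rfl
  -- pointwise expansion of the determinant
  have hpt : ∀ (p : ℕ) (ν : Fin p → ℝ),
      (Matrix.of fun r t : Fin (p+1) =>
          ∑ i, φ i ((Fin.cons l ν : Fin (p+1) → ℝ) r)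
            * ψ i ((Fin.cons m ν : Fin (p+1) → ℝ) t)).det
      = ∑ z : (Fin (p+1) → Fin M) × Equiv.Perm (Fin (p+1)),
          (((Equiv.Perm.sign z.2 : ℤ) : ℂ) * (φ (z.1 0) l * ψ (z.1 (z.2 0)) m))
            * ∏ r : Fin p, (φ (z.1 r.succ) (ν r) * ψ (z.1 (z.2 r.succ)) (ν r)) := by
    intro p ν
    rw [det_expand_rows (c := fun r i => φ i ((Fin.cons l ν : Fin (p+1) → ℝ) r))
        (w := fun i t => ψ i ((Fin.cons m ν : Fin (p+1) → ℝ) t))]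
    rw [Fintype.sum_prod_type]
    refine Finset.sum_congr rfl fun g _ => ?_
    rw [Matrix.det_apply', Finset.mul_sum]
    refine Finset.sum_congr rfl fun σ _ => ?_
    simp only [Matrix.of_apply, Fin.prod_univ_succ, Fin.cons_zero, Fin.cons_succ]
    rw [Finset.prod_mul_distrib]
    ring
  -- the integral of the determinant
  have hF : ∀ p : ℕ,
      (∫ ν in Set.univ.pi (fun _ : Fin p => Set.Icc x y),
        (Matrix.of fun r t : Fin (p+1) =>
          ∑ i, φ i ((Fin.cons l ν : Fin (p+1) → ℝ) r)
            * ψ i ((Fin.cons m ν : Fin (p+1) → ℝ) t)).det)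
      = ∑ g : Fin (p+1) → Fin M,
          (Matrix.of fun r t => (if r = 0 then P else S) (g r) (g t)).det := by
    intro p
    rw [restrict_pi_icc x y, ← hμ0]
    calc (∫ ν, (Matrix.of fun r t : Fin (p+1) =>
          ∑ i, φ i ((Fin.cons l ν : Fin (p+1) → ℝ) r)
            * ψ i ((Fin.cons m ν : Fin (p+1) → ℝ) t)).det ∂(Measure.pi fun _ => μ0))
        = ∫ ν, (∑ z : (Fin (p+1) → Fin M) × Equiv.Perm (Fin (p+1)),
            (((Equiv.Perm.sign z.2 : ℤ) : ℂ) * (φ (z.1 0) l * ψ (z.1 (z.2 0)) m))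
              * ∏ r : Fin p, (φ (z.1 r.succ) (ν r) * ψ (z.1 (z.2 r.succ)) (ν r)))
            ∂(Measure.pi fun _ => μ0) :=
          integral_congr_ae (Filter.Eventually.of_forall fun ν => hpt p ν)
      _ = ∑ z : (Fin (p+1) → Fin M) × Equiv.Perm (Fin (p+1)),
            ∫ ν, ((((Equiv.Perm.sign z.2 : ℤ) : ℂ) * (φ (z.1 0) l * ψ (z.1 (z.2 0)) m))
              * ∏ r : Fin p, (φ (z.1 r.succ) (ν r) * ψ (z.1 (z.2 r.succ)) (ν r)))
              ∂(Measure.pi fun _ => μ0) := by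
          refine integral_finset_sum _ fun z _ => ?_
          exact (integrable_pi_prod μ0
            (fun r => fun t => φ (z.1 r.succ) t * ψ (z.1 (z.2 r.succ)) t)
            (fun r => hmul _ _)).const_mul _
      _ = ∑ z : (Fin (p+1) → Fin M) × Equiv.Perm (Fin (p+1)),
            (((Equiv.Perm.sign z.2 : ℤ) : ℂ) * (φ (z.1 0) l * ψ (z.1 (z.2 0)) m))
              * ∏ r : Fin p, S (z.1 r.succ) (z.1 (z.2 r.succ)) := by
          refine Finset.sum_congr rfl fun z _ => ?_
          rw [MeasureTheory.integral_const_mul]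
          rw [integral_pi_prod μ0 (fun r => fun t => φ (z.1 r.succ) t * ψ (z.1 (z.2 r.succ)) t)]
          congr 1
          exact Finset.prod_congr rfl fun r _ => hSint _ _
      _ = ∑ g : Fin (p+1) → Fin M,
          (Matrix.of fun r t => (if r = 0 then P else S) (g r) (g t)).det := by
          have hdet2 : ∀ g : Fin (p+1) → Fin M,
              (Matrix.of fun r t => (if r = 0 then P else S) (g r) (g t)).det
              = ∑ σ : Equiv.Perm (Fin (p+1)),
                  ((Equiv.Perm.sign σ : ℤ) : ℂ) * ((φ (g 0) l * ψ (g (σ 0)) m)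
                    * ∏ r : Fin p, S (g r.succ) (g (σ r.succ))) := by
            intro g
            rw [← Matrix.det_transpose (Matrix.of fun r t : Fin (p+1) =>
                (if r = 0 then P else S) (g r) (g t)), Matrix.det_apply']
            refine Finset.sum_congr rfl fun σ _ => ?_
            simp only [Matrix.transpose_apply, Matrix.of_apply]
            rw [Fin.prod_univ_succ, if_pos rfl]
            have hsucc : ∀ r : Fin p,
                (if r.succ = (0 : Fin (p+1)) then P else S) (g r.succ) (g (σ r.succ))
                  = S (g r.succ) (g (σ r.succ)) := fun r => by
              rw [if_neg (Fin.succ_ne_zero r)]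
            rw [Finset.prod_congr rfl fun r _ => hsucc r, hPdef]
            simp only [Matrix.of_apply]
          rw [Fintype.sum_prod_type]
          refine Finset.sum_congr rfl fun g _ => ?_
          rw [hdet2 g]
          refine Finset.sum_congr rfl fun σ _ => ?_
          ring
  -- row scaling
  have hscale : ∀ (p : ℕ) (g : Fin (p+1) → Fin M),
      (-γ)^p * (Matrix.of fun r t => (if r = 0 then P else S) (g r) (g t)).det
      = (Matrix.of fun r t => (if r = 0 then P else Q) (g r) (g t)).det := by
    intro p g
    have h1 : (Matrix.of fun r t : Fin (p+1) =>
          (if r = (0 : Fin (p+1)) then (1 : ℂ) else -γ) *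
            ((Matrix.of fun r t : Fin (p+1) =>
              (if r = 0 then P else S) (g r) (g t)) r t))
        = Matrix.of fun r t => (if r = 0 then P else Q) (g r) (g t) := by
      ext r t
      by_cases h : r = 0
      · simp [h]
      · simp [h, hQdef, Matrix.smul_apply]
    rw [← h1, Matrix.det_mul_column]
    congr 1
    rw [Fin.prod_univ_succ]
    simp [Fin.succ_ne_zero]
  -- convert K-entries to sum form
  simp only [hK]
  -- assemble the left-hand side
  have hsplit : Finset.range M = insert 0 (Finset.Icc 1 (M-1)) := by
    ext n
    simp only [Finset.mem_range, Finset.mem_insert, Finset.mem_Icc]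
    omega
  have hterm : ∀ p : ℕ, ((-γ) ^ p / (p.factorial : ℂ)) *
        (∫ ν in Set.univ.pi (fun _ : Fin p => Set.Icc x y),
          (Matrix.of fun r t : Fin (p+1) =>
            ∑ i, φ i ((Fin.cons l ν : Fin (p+1) → ℝ) r)
              * ψ i ((Fin.cons m ν : Fin (p+1) → ℝ) t)).det)
      = ((p.factorial : ℂ))⁻¹ * ∑ g : Fin (p+1) → Fin M,
          (Matrix.of fun r t => (if r = 0 then P else Q) (g r) (g t)).det := by
    intro p
    rw [hF p]
    rw [div_eq_mul_inv, mul_comm ((-γ)^p) _, mul_assoc]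
    congr 1
    rw [Finset.mul_sum]
    exact Finset.sum_congr rfl fun g _ => hscale p g
  have hK0 : (∑ i, φ i l * ψ i m)
      = ((Nat.factorial 0 : ℂ))⁻¹ * ∑ g : Fin (0+1) → Fin M,
        (Matrix.of fun r t => (if r = 0 then P else Q) (g r) (g t)).det := by
    rw [Nat.factorial_zero, Nat.cast_one, inv_one, one_mul]
    refine Fintype.sum_bijective (fun i : Fin M => fun _ : Fin (0+1) => i)
      ⟨fun i j h => congrFun h 0, fun g => ⟨g 0, funext fun r => congrArg g
        (fin_one_eq 0 r)⟩⟩ _ _ ?_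
    intro i
    rw [det_fin_zero_add_one]
    simp [hPdef]
  calc (∑ i, φ i l * ψ i m) + ∑ p ∈ Finset.Icc 1 (M - 1), ((-γ) ^ p / (p.factorial : ℂ)) *
          ∫ ν in Set.univ.pi (fun _ : Fin p => Set.Icc x y),
            Matrix.det (Matrix.of fun r t : Fin (p + 1) =>
              ∑ i, φ i ((Fin.cons l ν : Fin (p + 1) → ℝ) r)
                * ψ i ((Fin.cons m ν : Fin (p + 1) → ℝ) t))
      = ∑ p ∈ Finset.range M, ((p.factorial : ℂ))⁻¹ *
          ∑ g : Fin (p+1) → Fin M, (Matrix.of fun r t =>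
            (if r = 0 then P else Q) (g r) (g t)).det := by
        rw [hsplit, Finset.sum_insert (by simp)]
        exact congrArg₂ (· + ·) hK0 (Finset.sum_congr rfl fun p _ => hterm p)
    _ = (1 + Q + P).det - (1 + Q).det :=
        alg_master hM (fun i => φ i l) (fun j => ψ j m) P Q (fun i j => rfl)
    _ = (B + P).det - B.det := by rw [hBQ]
    _ = R l m * B.det := by
        have hPcr : P = Matrix.replicateCol Unit (fun i => φ i l) * Matrix.replicateRow Unit (fun j => ψ j m) := by
          ext i j
          simp [Matrix.mul_apply, hPdef]
        have hRcalc : R l m = ∑ j : Fin M, (∑ i : Fin M, ψ i m * B⁻¹ i j) * φ j l := by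
          have htr : (1 - γ • S.transpose)⁻¹ = B⁻¹.transpose := by
            have h1 : (1 - γ • S.transpose) = B.transpose := by
              rw [hBdef, Matrix.transpose_sub, Matrix.transpose_smul, Matrix.transpose_one]
            rw [h1, ← Matrix.transpose_nonsing_inv]
          rw [hR]
          simp only [htr, Matrix.transpose_apply]
          refine Finset.sum_congr rfl fun j _ => ?_
          rw [Finset.sum_mul]
          refine Finset.sum_congr rfl fun i _ => ?_
          ring
        rw [hPcr, Matrix.det_add_replicateCol_mul_replicateRow hBdet, Matrix.det_unique
          (1 + Matrix.replicateRow Unit (fun j => ψ j m) * B⁻¹ * Matrix.replicateCol Unit (fun i => φ i l))]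
        simp only [Matrix.add_apply, Matrix.one_apply_eq, Matrix.mul_apply, Matrix.replicateRow_apply,
          Matrix.replicateCol_apply, Finset.univ_unique, Finset.sum_singleton]
        rw [hRcalc]
        ring
    _ = R l m * (1 - γ • S).det := by rw [hBdef]
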